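/- Assume A_n → A almost everywhere on Ω, u_n ⇀ u weakly in L²(μ; ℝ^d), and ∫_Ω ⟨A_n(x)u_n(x), u_n(x)⟩ dμ(x) → ∫_Ω ⟨A(x)u(x), u(x)⟩ dμ(x). Then u_n → u strongly in L²(μ; ℝ^d), i.e. ∫_Ω |u_n(x) − u(x)|² dμ(x) → 0. (This is the step by which the discrete Darcy velocities, which converge weakly and whose energies converge, are shown to converge strongly in L².) -/

import Mathlib

open MeasureTheory Matrix Filter

lemma dotnn {d : ℕ} (v : Fin d → ℝ) : 0 ≤ v ⬝ᵥ v :=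
  Finset.sum_nonneg fun _ _ => mul_self_nonneg _

lemma dot_cs {d : ℕ} (a b : Fin d → ℝ) : (a ⬝ᵥ b) ^ 2 ≤ (a ⬝ᵥ a) * (b ⬝ᵥ b) := by
  have := Finset.sum_mul_sq_le_sq_mul_sq Finset.univ a b
  simpa [dotProduct, sq] using this

lemma dot_symm_swap {d : ℕ} {M : Matrix (Fin d) (Fin d) ℝ} (hM : M.IsSymm) (ξ η : Fin d → ℝ) :
    ξ ⬝ᵥ M *ᵥ η = η ⬝ᵥ M *ᵥ ξ := by
  rw [Matrix.dotProduct_mulVec, ← Matrix.mulVec_transpose, hM.eq, dotProduct_comm]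

lemma mixed_cs {d : ℕ} {k₁ : ℝ} {M : Matrix (Fin d) (Fin d) ℝ} (hM : M.IsSymm)
    (h0 : ∀ ξ : Fin d → ℝ, 0 ≤ ξ ⬝ᵥ M *ᵥ ξ) (h1 : ∀ ξ : Fin d → ℝ, ξ ⬝ᵥ M *ᵥ ξ ≤ k₁ * (ξ ⬝ᵥ ξ))
    (ξ η : Fin d → ℝ) : (ξ ⬝ᵥ M *ᵥ η) ^ 2 ≤ k₁ ^ 2 * ((ξ ⬝ᵥ ξ) * (η ⬝ᵥ η)) := by
  have key : ∀ t : ℝ, 0 ≤ (ξ ⬝ᵥ M *ᵥ ξ) * (t * t) + (2 * (ξ ⬝ᵥ M *ᵥ η)) * t + (η ⬝ᵥ M *ᵥ η) := by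
    intro t
    have h := h0 (η + t • ξ)
    have hswap := dot_symm_swap hM η ξ
    simp only [Matrix.mulVec_add, Matrix.mulVec_smul, dotProduct_add,
      add_dotProduct, dotProduct_smul, smul_dotProduct,
      smul_eq_mul] at h
    have h2 : η ⬝ᵥ M *ᵥ η + t * (ξ ⬝ᵥ M *ᵥ η) + t * (η ⬝ᵥ M *ᵥ ξ + t * (ξ ⬝ᵥ M *ᵥ ξ)) =
        (ξ ⬝ᵥ M *ᵥ ξ) * (t * t) + 2 * (ξ ⬝ᵥ M *ᵥ η) * t + η ⬝ᵥ M *ᵥ η := by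
      rw [hswap]; ring
    linarith [h, h2]
  have hd := discrim_le_zero key
  rw [discrim] at hd
  have hk₁ξ : 0 ≤ k₁ * (ξ ⬝ᵥ ξ) := le_trans (h0 ξ) (h1 ξ)
  nlinarith [h0 ξ, h0 η, h1 ξ, h1 η, dotnn ξ, dotnn η,
    mul_le_mul_of_nonneg_left (h1 η) hk₁ξ]

lemma mixed_bound {d : ℕ} {k₁ : ℝ} {M : Matrix (Fin d) (Fin d) ℝ} (hM : M.IsSymm)
    (h0 : ∀ ξ : Fin d → ℝ, 0 ≤ ξ ⬝ᵥ M *ᵥ ξ) (h1 : ∀ ξ : Fin d → ℝ, ξ ⬝ᵥ M *ᵥ ξ ≤ k₁ * (ξ ⬝ᵥ ξ))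
    (ξ η : Fin d → ℝ) : |ξ ⬝ᵥ M *ᵥ η| ≤ k₁ / 2 * (ξ ⬝ᵥ ξ + η ⬝ᵥ η) := by
  have h := mixed_cs hM h0 h1 ξ η
  have hk₁ξ : 0 ≤ k₁ * (ξ ⬝ᵥ ξ) := le_trans (h0 ξ) (h1 ξ)
  have hk₁η : 0 ≤ k₁ * (η ⬝ᵥ η) := le_trans (h0 η) (h1 η)
  rw [abs_le]
  constructor <;> nlinarith [dotnn ξ, dotnn η, sq_nonneg (k₁ * (ξ ⬝ᵥ ξ) - k₁ * (η ⬝ᵥ η)),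
    sq_nonneg (ξ ⬝ᵥ M *ᵥ η)]

lemma op_bound {d : ℕ} {k₁ : ℝ} {M : Matrix (Fin d) (Fin d) ℝ} (hM : M.IsSymm)
    (h0 : ∀ ξ : Fin d → ℝ, 0 ≤ ξ ⬝ᵥ M *ᵥ ξ) (h1 : ∀ ξ : Fin d → ℝ, ξ ⬝ᵥ M *ᵥ ξ ≤ k₁ * (ξ ⬝ᵥ ξ))
    (v : Fin d → ℝ) : (M *ᵥ v) ⬝ᵥ (M *ᵥ v) ≤ k₁ ^ 2 * (v ⬝ᵥ v) := by
  have h := mixed_cs hM h0 h1 (M *ᵥ v) v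
  have hs := dotnn (M *ᵥ v)
  rcases eq_or_lt_of_le hs with hs0 | hs0
  · rw [← hs0]
    have hk₁v : 0 ≤ k₁ * (v ⬝ᵥ v) := le_trans (h0 v) (h1 v)
    nlinarith [dotnn v, sq_nonneg k₁]
  · nlinarith [dotnn v]

lemma amgm_dot {d : ℕ} {δ : ℝ} (hδ : 0 < δ) (a b : Fin d → ℝ) :
    |a ⬝ᵥ b| ≤ δ * (a ⬝ᵥ a) + (4 * δ)⁻¹ * (b ⬝ᵥ b) := by
  have cs := dot_cs a b
  set c := (4 * δ)⁻¹ with hc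
  have hc4 : 4 * δ * c = 1 := by
    rw [hc]; field_simp
  have hcpos : 0 < c := by rw [hc]; positivity
  have h14 : 4 * (δ * (a ⬝ᵥ a)) * (c * (b ⬝ᵥ b)) = (a ⬝ᵥ a) * (b ⬝ᵥ b) := by
    calc 4 * (δ * (a ⬝ᵥ a)) * (c * (b ⬝ᵥ b)) = 4 * δ * c * ((a ⬝ᵥ a) * (b ⬝ᵥ b)) := by ring
      _ = (a ⬝ᵥ a) * (b ⬝ᵥ b) := by rw [hc4, one_mul]
  have key : (a ⬝ᵥ b) ^ 2 ≤ (δ * (a ⬝ᵥ a) + c * (b ⬝ᵥ b)) ^ 2 := by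
    nlinarith [sq_nonneg (δ * (a ⬝ᵥ a) - c * (b ⬝ᵥ b)), h14, cs]
  have hpos : 0 ≤ δ * (a ⬝ᵥ a) + c * (b ⬝ᵥ b) :=
    add_nonneg (mul_nonneg hδ.le (dotnn a)) (mul_nonneg hcpos.le (dotnn b))
  exact abs_le.mpr (abs_le_of_sq_le_sq' key hpos)

lemma sub_dot_bound {d : ℕ} (a b : Fin d → ℝ) :
    (a - b) ⬝ᵥ (a - b) ≤ 2 * (a ⬝ᵥ a) + 2 * (b ⬝ᵥ b) := by
  have h2 : (a - b) ⬝ᵥ (a - b) = a ⬝ᵥ a - 2 * (a ⬝ᵥ b) + b ⬝ᵥ b := by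
    simp only [sub_dotProduct, dotProduct_sub, dotProduct_comm b a]
    ring
  have := amgm_dot (by norm_num : (0:ℝ) < 1/2) a b
  rw [abs_le] at this
  rw [h2]
  have h3 := this.1
  have h4 := this.2
  norm_num at h3 h4
  nlinarith [h3, h4]

lemma meas_dot {Ω : Type*} [MeasurableSpace Ω] {d : ℕ} {v w : Ω → Fin d → ℝ}
    (hv : Measurable v) (hw : Measurable w) : Measurable fun x => v x ⬝ᵥ w x := by
  simp only [dotProduct]
  exact Finset.measurable_sum _ fun i _ =>
    ((measurable_pi_apply i).comp hv).mul ((measurable_pi_apply i).comp hw)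

lemma meas_mulVec {Ω : Type*} [MeasurableSpace Ω] {d : ℕ} {B : Ω → Matrix (Fin d) (Fin d) ℝ}
    (hB : ∀ i j, Measurable fun x => B x i j) {w : Ω → Fin d → ℝ} (hw : Measurable w) :
    Measurable fun x => B x *ᵥ w x := by
  apply measurable_pi_lambda
  intro i
  simp only [Matrix.mulVec, dotProduct]
  exact Finset.measurable_sum _ fun j _ => (hB i j).mul ((measurable_pi_apply j).comp hw)

lemma cont_mulVec {d : ℕ} (η : Fin d → ℝ) :
    Continuous fun M : Matrix (Fin d) (Fin d) ℝ => M *ᵥ η := by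
  apply continuous_pi; intro i
  simp only [Matrix.mulVec, dotProduct]
  exact continuous_finset_sum _ fun j _ =>
    (continuous_apply_apply i j).mul continuous_const

lemma cont_dotleft {d : ℕ} (ξ : Fin d → ℝ) : Continuous fun v : Fin d → ℝ => ξ ⬝ᵥ v := by
  simp only [dotProduct]
  exact continuous_finset_sum _ fun i _ => continuous_const.mul (continuous_apply i)

lemma cont_dotdot {d : ℕ} : Continuous fun v : Fin d → ℝ => v ⬝ᵥ v := by
  simp only [dotProduct]
  exact continuous_finset_sum _ fun i _ => (continuous_apply i).mul (continuous_apply i)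

/-- Let `A_n, A` be measurable, a.e. symmetric, uniformly elliptic and
bounded matrix fields with `A_n → A` a.e., and let `u_n ⇀ u` weakly in `L²(μ; ℝ^d)` with
convergence of the energies `∫ ⟨A_n u_n, u_n⟩ → ∫ ⟨A u, u⟩`. Then `u_n → u` strongly in
`L²(μ; ℝ^d)`, i.e. `∫ |u_n − u|² dμ → 0`. -/
theorem weak_plus_energy_implies_strong
    (Ω : Type*) [MeasurableSpace Ω] (μ : Measure Ω) [SigmaFinite μ]
    (d : ℕ) (hd : 1 ≤ d) (k₀ k₁ : ℝ) (hk₀ : 0 < k₀) (hk : k₀ ≤ k₁)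
    (A : ℕ → Ω → Matrix (Fin d) (Fin d) ℝ) (Alim : Ω → Matrix (Fin d) (Fin d) ℝ)
    (hAmeas : ∀ n, ∀ i j, Measurable fun x => A n x i j)
    (hAlimmeas : ∀ i j, Measurable fun x => Alim x i j)
    (hsymm : ∀ᵐ x ∂μ, (∀ n, (A n x).IsSymm) ∧ (Alim x).IsSymm)
    (hellip : ∀ᵐ x ∂μ, ∀ ξ : Fin d → ℝ,
      (∀ n, k₀ * (ξ ⬝ᵥ ξ) ≤ ξ ⬝ᵥ ((A n x) *ᵥ ξ) ∧ ξ ⬝ᵥ ((A n x) *ᵥ ξ) ≤ k₁ * (ξ ⬝ᵥ ξ)) ∧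
        (k₀ * (ξ ⬝ᵥ ξ) ≤ ξ ⬝ᵥ ((Alim x) *ᵥ ξ) ∧ ξ ⬝ᵥ ((Alim x) *ᵥ ξ) ≤ k₁ * (ξ ⬝ᵥ ξ)))
    (hae : ∀ᵐ x ∂μ, Tendsto (fun n => A n x) atTop (nhds (Alim x)))
    (u : ℕ → Ω → Fin d → ℝ) (ulim : Ω → Fin d → ℝ)
    (humeas : ∀ n, Measurable (u n)) (hulimmeas : Measurable ulim)
    (huL2 : ∀ n, Integrable (fun x => u n x ⬝ᵥ u n x) μ)
    (hulimL2 : Integrable (fun x => ulim x ⬝ᵥ ulim x) μ)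
    (hweak : ∀ v : Ω → Fin d → ℝ, Measurable v → Integrable (fun x => v x ⬝ᵥ v x) μ →
      Tendsto (fun n => ∫ x, u n x ⬝ᵥ v x ∂μ) atTop (nhds (∫ x, ulim x ⬝ᵥ v x ∂μ)))
    (henergy : Tendsto (fun n => ∫ x, u n x ⬝ᵥ ((A n x) *ᵥ u n x) ∂μ) atTop
      (nhds (∫ x, ulim x ⬝ᵥ ((Alim x) *ᵥ ulim x) ∂μ))) :
    Tendsto (fun n => ∫ x, (u n x - ulim x) ⬝ᵥ (u n x - ulim x) ∂μ) atTop (nhds 0) := by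
  have hk₁0 : (0:ℝ) < k₁ := hk₀.trans_le hk
  -- measurability
  have mAlim : Measurable fun x => Alim x *ᵥ ulim x := meas_mulVec hAlimmeas hulimmeas
  -- integrability facts
  have hI1 : ∀ n, Integrable (fun x => u n x ⬝ᵥ (A n x *ᵥ u n x)) μ := by
    intro n
    refine Integrable.mono' ((huL2 n).const_mul k₁)
      ((meas_dot (humeas n) (meas_mulVec (hAmeas n) (humeas n))).aestronglyMeasurable) ?_
    filter_upwards [hellip] with x hell
    have h := (hell (u n x)).1 n
    rw [Real.norm_eq_abs, abs_of_nonneg (le_trans (mul_nonneg hk₀.le (dotnn _)) h.1)]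
    exact h.2
  have hI2 : ∀ n, Integrable (fun x => u n x ⬝ᵥ (A n x *ᵥ ulim x)) μ := by
    intro n
    refine Integrable.mono' (((huL2 n).add hulimL2).const_mul (k₁ / 2))
      ((meas_dot (humeas n) (meas_mulVec (hAmeas n) hulimmeas)).aestronglyMeasurable) ?_
    filter_upwards [hellip, hsymm] with x hell hsym
    have h0 : ∀ ξ : Fin d → ℝ, 0 ≤ ξ ⬝ᵥ A n x *ᵥ ξ := fun ξ =>
      le_trans (mul_nonneg hk₀.le (dotnn ξ)) ((hell ξ).1 n).1
    exact mixed_bound (hsym.1 n) h0 (fun ξ => ((hell ξ).1 n).2) (u n x) (ulim x)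
  have hI3 : ∀ n, Integrable (fun x => ulim x ⬝ᵥ (A n x *ᵥ ulim x)) μ := by
    intro n
    refine Integrable.mono' (hulimL2.const_mul k₁)
      ((meas_dot hulimmeas (meas_mulVec (hAmeas n) hulimmeas)).aestronglyMeasurable) ?_
    filter_upwards [hellip] with x hell
    have h := (hell (ulim x)).1 n
    rw [Real.norm_eq_abs, abs_of_nonneg (le_trans (mul_nonneg hk₀.le (dotnn _)) h.1)]
    exact h.2
  have hIv₀ : Integrable (fun x => (Alim x *ᵥ ulim x) ⬝ᵥ (Alim x *ᵥ ulim x)) μ := by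
    refine Integrable.mono' (hulimL2.const_mul (k₁ ^ 2))
      ((meas_dot mAlim mAlim).aestronglyMeasurable) ?_
    filter_upwards [hellip, hsymm] with x hell hsym
    have h0 : ∀ ξ : Fin d → ℝ, 0 ≤ ξ ⬝ᵥ Alim x *ᵥ ξ := fun ξ =>
      le_trans (mul_nonneg hk₀.le (dotnn ξ)) (hell ξ).2.1
    rw [Real.norm_eq_abs, abs_of_nonneg (dotnn _)]
    exact op_bound hsym.2 h0 (fun ξ => (hell ξ).2.2) (ulim x)
  have hI4 : ∀ n, Integrable (fun x => u n x ⬝ᵥ (Alim x *ᵥ ulim x)) μ := by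
    intro n
    refine Integrable.mono'
      (((huL2 n).const_mul (1/2)).add (hIv₀.const_mul (4 * (1/2:ℝ))⁻¹))
      ((meas_dot (humeas n) mAlim).aestronglyMeasurable) ?_
    exact Filter.Eventually.of_forall fun x => amgm_dot (by norm_num) _ _
  have hI5 : ∀ n, Integrable (fun x => (u n x - ulim x) ⬝ᵥ (u n x - ulim x)) μ := by
    intro n
    refine Integrable.mono' (((huL2 n).const_mul 2).add (hulimL2.const_mul 2))
      ((meas_dot ((humeas n).sub hulimmeas) ((humeas n).sub hulimmeas)).aestronglyMeasurable) ?_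
    refine Filter.Eventually.of_forall fun x => ?_
    rw [Real.norm_eq_abs, abs_of_nonneg (dotnn _)]
    exact sub_dot_bound _ _
  have hI6 : ∀ n, Integrable (fun x => (u n x - ulim x) ⬝ᵥ (A n x *ᵥ (u n x - ulim x))) μ := by
    intro n
    refine Integrable.mono' ((hI5 n).const_mul k₁)
      ((meas_dot ((humeas n).sub hulimmeas)
        (meas_mulVec (hAmeas n) ((humeas n).sub hulimmeas))).aestronglyMeasurable) ?_
    filter_upwards [hellip] with x hell
    have h := (hell (u n x - ulim x)).1 n
    rw [Real.norm_eq_abs, abs_of_nonneg (le_trans (mul_nonneg hk₀.le (dotnn _)) h.1)]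
    exact h.2
  have hI7 : ∀ n, Integrable
      (fun x => (A n x *ᵥ ulim x - Alim x *ᵥ ulim x) ⬝ᵥ (A n x *ᵥ ulim x - Alim x *ᵥ ulim x)) μ := by
    intro n
    refine Integrable.mono' (hulimL2.const_mul (4 * k₁ ^ 2))
      ((meas_dot ((meas_mulVec (hAmeas n) hulimmeas).sub mAlim)
        ((meas_mulVec (hAmeas n) hulimmeas).sub mAlim)).aestronglyMeasurable) ?_
    filter_upwards [hellip, hsymm] with x hell hsym
    have h0n : ∀ ξ : Fin d → ℝ, 0 ≤ ξ ⬝ᵥ A n x *ᵥ ξ := fun ξ =>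
      le_trans (mul_nonneg hk₀.le (dotnn ξ)) ((hell ξ).1 n).1
    have h0l : ∀ ξ : Fin d → ℝ, 0 ≤ ξ ⬝ᵥ Alim x *ᵥ ξ := fun ξ =>
      le_trans (mul_nonneg hk₀.le (dotnn ξ)) (hell ξ).2.1
    have hb1 := op_bound (hsym.1 n) h0n (fun ξ => ((hell ξ).1 n).2) (ulim x)
    have hb2 := op_bound hsym.2 h0l (fun ξ => (hell ξ).2.2) (ulim x)
    have hb3 := sub_dot_bound (A n x *ᵥ ulim x) (Alim x *ᵥ ulim x)
    rw [Real.norm_eq_abs, abs_of_nonneg (dotnn _)]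
    nlinarith [hb1, hb2, hb3]
  -- uniform L² bound on u n
  obtain ⟨C₀, hC₀⟩ := henergy.bddAbove_range
  have hB : ∀ n, ∫ x, u n x ⬝ᵥ u n x ∂μ ≤ C₀ / k₀ := by
    intro n
    have h1 : k₀ * ∫ x, u n x ⬝ᵥ u n x ∂μ ≤ ∫ x, u n x ⬝ᵥ (A n x *ᵥ u n x) ∂μ := by
      rw [← integral_const_mul]
      refine integral_mono_ae ((huL2 n).const_mul k₀) (hI1 n) ?_
      filter_upwards [hellip] with x hell
      exact ((hell (u n x)).1 n).1
    have h2 : ∫ x, u n x ⬝ᵥ (A n x *ᵥ u n x) ∂μ ≤ C₀ := hC₀ ⟨n, rfl⟩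
    rw [le_div_iff₀ hk₀]
    linarith
  set B := C₀ / k₀ with hBdef
  have hB0 : 0 ≤ B := le_trans (integral_nonneg fun x => dotnn _) (hB 0)
  -- convergence of ∫ ulim ⬝ A_n ulim
  have hR : Tendsto (fun n => ∫ x, ulim x ⬝ᵥ (A n x *ᵥ ulim x) ∂μ) atTop
      (nhds (∫ x, ulim x ⬝ᵥ (Alim x *ᵥ ulim x) ∂μ)) := by
    refine tendsto_integral_of_dominated_convergence (fun x => k₁ * (ulim x ⬝ᵥ ulim x))
      (fun n => (meas_dot hulimmeas (meas_mulVec (hAmeas n) hulimmeas)).aestronglyMeasurable)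
      (hulimL2.const_mul k₁) ?_ ?_
    · intro n
      filter_upwards [hellip] with x hell
      have h := (hell (ulim x)).1 n
      rw [Real.norm_eq_abs, abs_of_nonneg (le_trans (mul_nonneg hk₀.le (dotnn _)) h.1)]
      exact h.2
    · filter_upwards [hae] with x hx
      exact (((cont_dotleft (ulim x)).comp (cont_mulVec (ulim x))).tendsto (Alim x)).comp hx
  -- D n → 0
  have hD : Tendsto (fun n =>
      ∫ x, (A n x *ᵥ ulim x - Alim x *ᵥ ulim x) ⬝ᵥ (A n x *ᵥ ulim x - Alim x *ᵥ ulim x) ∂μ)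
      atTop (nhds 0) := by
    have h0 : (∫ (_ : Ω), (0:ℝ) ∂μ) = 0 := integral_zero _ _
    rw [← h0]
    refine tendsto_integral_of_dominated_convergence (fun x => 4 * k₁ ^ 2 * (ulim x ⬝ᵥ ulim x))
      (fun n => (meas_dot ((meas_mulVec (hAmeas n) hulimmeas).sub mAlim)
        ((meas_mulVec (hAmeas n) hulimmeas).sub mAlim)).aestronglyMeasurable)
      (hulimL2.const_mul _) ?_ ?_
    · intro n
      filter_upwards [hellip, hsymm] with x hell hsym
      have h0n : ∀ ξ : Fin d → ℝ, 0 ≤ ξ ⬝ᵥ A n x *ᵥ ξ := fun ξ =>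
        le_trans (mul_nonneg hk₀.le (dotnn ξ)) ((hell ξ).1 n).1
      have h0l : ∀ ξ : Fin d → ℝ, 0 ≤ ξ ⬝ᵥ Alim x *ᵥ ξ := fun ξ =>
        le_trans (mul_nonneg hk₀.le (dotnn ξ)) (hell ξ).2.1
      have hb1 := op_bound (hsym.1 n) h0n (fun ξ => ((hell ξ).1 n).2) (ulim x)
      have hb2 := op_bound hsym.2 h0l (fun ξ => (hell ξ).2.2) (ulim x)
      have hb3 := sub_dot_bound (A n x *ᵥ ulim x) (Alim x *ᵥ ulim x)
      rw [Real.norm_eq_abs, abs_of_nonneg (dotnn _)]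
      nlinarith [hb1, hb2, hb3]
    · filter_upwards [hae] with x hx
      have hc : Continuous fun M : Matrix (Fin d) (Fin d) ℝ =>
          (M *ᵥ ulim x - Alim x *ᵥ ulim x) ⬝ᵥ (M *ᵥ ulim x - Alim x *ᵥ ulim x) :=
        cont_dotdot.comp ((cont_mulVec (ulim x)).sub continuous_const)
      have := (hc.tendsto (Alim x)).comp hx
      simpa [Function.comp_def] using this
  -- weak convergence against v₀
  have hS := hweak (fun x => Alim x *ᵥ ulim x) mAlim hIv₀
  -- T - S → 0
  have hTS : Tendsto (fun n => (∫ x, u n x ⬝ᵥ (A n x *ᵥ ulim x) ∂μ)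
      - ∫ x, u n x ⬝ᵥ (Alim x *ᵥ ulim x) ∂μ) atTop (nhds 0) := by
    rw [NormedAddCommGroup.tendsto_nhds_zero]
    intro ε hε
    set δ := ε / (2 * (B + 1)) with hδdef
    have hδ : 0 < δ := div_pos hε (by linarith)
    have hbound : ∀ n, |(∫ x, u n x ⬝ᵥ (A n x *ᵥ ulim x) ∂μ)
        - ∫ x, u n x ⬝ᵥ (Alim x *ᵥ ulim x) ∂μ| ≤ δ * B + (4 * δ)⁻¹ *
        ∫ x, (A n x *ᵥ ulim x - Alim x *ᵥ ulim x) ⬝ᵥ (A n x *ᵥ ulim x - Alim x *ᵥ ulim x) ∂μ := by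
      intro n
      have e1 : (∫ x, u n x ⬝ᵥ (A n x *ᵥ ulim x) ∂μ) - ∫ x, u n x ⬝ᵥ (Alim x *ᵥ ulim x) ∂μ
          = ∫ x, u n x ⬝ᵥ (A n x *ᵥ ulim x - Alim x *ᵥ ulim x) ∂μ := by
        rw [← integral_sub (hI2 n) (hI4 n)]
        exact integral_congr_ae (Filter.Eventually.of_forall fun x => by
          simp [dotProduct_sub])
      have hIg : Integrable (fun x => u n x ⬝ᵥ (A n x *ᵥ ulim x - Alim x *ᵥ ulim x)) μ := by
        have h := (hI2 n).sub (hI4 n)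
        refine h.congr (Filter.Eventually.of_forall fun x => ?_)
        simp [dotProduct_sub]
      calc |(∫ x, u n x ⬝ᵥ (A n x *ᵥ ulim x) ∂μ) - ∫ x, u n x ⬝ᵥ (Alim x *ᵥ ulim x) ∂μ|
          = |∫ x, u n x ⬝ᵥ (A n x *ᵥ ulim x - Alim x *ᵥ ulim x) ∂μ| := by rw [e1]
        _ ≤ ∫ x, |u n x ⬝ᵥ (A n x *ᵥ ulim x - Alim x *ᵥ ulim x)| ∂μ := by
            simpa [Real.norm_eq_abs] using
              norm_integral_le_integral_norm (fun x => u n x ⬝ᵥ (A n x *ᵥ ulim x - Alim x *ᵥ ulim x)) (μ := μ)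
        _ ≤ ∫ x, (δ * (u n x ⬝ᵥ u n x) + (4 * δ)⁻¹ *
            ((A n x *ᵥ ulim x - Alim x *ᵥ ulim x) ⬝ᵥ (A n x *ᵥ ulim x - Alim x *ᵥ ulim x))) ∂μ := by
            refine integral_mono_ae hIg.abs
              (((huL2 n).const_mul δ).add ((hI7 n).const_mul _)) ?_
            exact Filter.Eventually.of_forall fun x => amgm_dot hδ _ _
        _ = δ * (∫ x, u n x ⬝ᵥ u n x ∂μ) + (4 * δ)⁻¹ *
            ∫ x, (A n x *ᵥ ulim x - Alim x *ᵥ ulim x) ⬝ᵥ (A n x *ᵥ ulim x - Alim x *ᵥ ulim x) ∂μ := by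
            rw [integral_add ((huL2 n).const_mul δ) ((hI7 n).const_mul _),
              integral_const_mul, integral_const_mul]
        _ ≤ δ * B + (4 * δ)⁻¹ *
            ∫ x, (A n x *ᵥ ulim x - Alim x *ᵥ ulim x) ⬝ᵥ (A n x *ᵥ ulim x - Alim x *ᵥ ulim x) ∂μ := by
            exact add_le_add_left (mul_le_mul_of_nonneg_left (hB n) hδ.le) _
    have hhalf : δ * B < ε / 2 := by
      rw [hδdef, div_mul_eq_mul_div, div_lt_div_iff₀ (by linarith) (by norm_num)]
      nlinarith
    have hev : ∀ᶠ n in atTop, (4 * δ)⁻¹ *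
        (∫ x, (A n x *ᵥ ulim x - Alim x *ᵥ ulim x) ⬝ᵥ (A n x *ᵥ ulim x - Alim x *ᵥ ulim x) ∂μ)
        < ε / 2 := by
      have h := hD.const_mul (4 * δ)⁻¹
      rw [mul_zero] at h
      exact h.eventually_lt_const (by linarith)
    filter_upwards [hev] with n hn
    rw [Real.norm_eq_abs]
    calc |(∫ x, u n x ⬝ᵥ (A n x *ᵥ ulim x) ∂μ) - ∫ x, u n x ⬝ᵥ (Alim x *ᵥ ulim x) ∂μ|
        ≤ δ * B + (4 * δ)⁻¹ *
          ∫ x, (A n x *ᵥ ulim x - Alim x *ᵥ ulim x) ⬝ᵥ (A n x *ᵥ ulim x - Alim x *ᵥ ulim x) ∂μ :=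
          hbound n
      _ < ε / 2 + ε / 2 := by exact add_lt_add hhalf hn
      _ = ε := by ring
  -- T → Elim
  have hT : Tendsto (fun n => ∫ x, u n x ⬝ᵥ (A n x *ᵥ ulim x) ∂μ) atTop
      (nhds (∫ x, ulim x ⬝ᵥ (Alim x *ᵥ ulim x) ∂μ)) := by
    have h := hS.add hTS
    rw [add_zero] at h
    have heq : (fun n => (∫ x, u n x ⬝ᵥ (Alim x *ᵥ ulim x) ∂μ)
        + ((∫ x, u n x ⬝ᵥ (A n x *ᵥ ulim x) ∂μ) - ∫ x, u n x ⬝ᵥ (Alim x *ᵥ ulim x) ∂μ))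
        = fun n => ∫ x, u n x ⬝ᵥ (A n x *ᵥ ulim x) ∂μ := by
      funext n; ring
    rwa [heq] at h
  -- splitting the quadratic form
  have hQsplit : ∀ n, ∫ x, (u n x - ulim x) ⬝ᵥ (A n x *ᵥ (u n x - ulim x)) ∂μ
      = (∫ x, u n x ⬝ᵥ (A n x *ᵥ u n x) ∂μ) - 2 * (∫ x, u n x ⬝ᵥ (A n x *ᵥ ulim x) ∂μ)
        + ∫ x, ulim x ⬝ᵥ (A n x *ᵥ ulim x) ∂μ := by
    intro n
    have hptw : (fun x => (u n x - ulim x) ⬝ᵥ (A n x *ᵥ (u n x - ulim x))) =ᵐ[μ]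
        fun x => u n x ⬝ᵥ (A n x *ᵥ u n x) - 2 * (u n x ⬝ᵥ (A n x *ᵥ ulim x))
          + ulim x ⬝ᵥ (A n x *ᵥ ulim x) := by
      filter_upwards [hsymm] with x hsym
      have hswap := dot_symm_swap (hsym.1 n) (ulim x) (u n x)
      simp only [Matrix.mulVec_sub, dotProduct_sub, sub_dotProduct]
      rw [hswap]
      ring
    have hsub : Integrable (fun x => u n x ⬝ᵥ (A n x *ᵥ u n x)
        - 2 * (u n x ⬝ᵥ (A n x *ᵥ ulim x))) μ := (hI1 n).sub ((hI2 n).const_mul 2)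
    rw [integral_congr_ae hptw, integral_add hsub (hI3 n),
      integral_sub (hI1 n) ((hI2 n).const_mul 2), integral_const_mul]
  -- Q → 0
  have hQ : Tendsto (fun n => ∫ x, (u n x - ulim x) ⬝ᵥ (A n x *ᵥ (u n x - ulim x)) ∂μ)
      atTop (nhds 0) := by
    have h := (henergy.sub (hT.const_mul 2)).add hR
    have heq0 : (∫ x, ulim x ⬝ᵥ (Alim x *ᵥ ulim x) ∂μ)
        - 2 * (∫ x, ulim x ⬝ᵥ (Alim x *ᵥ ulim x) ∂μ)
        + (∫ x, ulim x ⬝ᵥ (Alim x *ᵥ ulim x) ∂μ) = 0 := by ring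
    rw [heq0] at h
    exact h.congr fun n => (hQsplit n).symm
  -- squeeze
  have hnonneg : ∀ n, 0 ≤ ∫ x, (u n x - ulim x) ⬝ᵥ (u n x - ulim x) ∂μ := fun n =>
    integral_nonneg fun x => dotnn _
  have hle : ∀ n, (∫ x, (u n x - ulim x) ⬝ᵥ (u n x - ulim x) ∂μ)
      ≤ k₀⁻¹ * ∫ x, (u n x - ulim x) ⬝ᵥ (A n x *ᵥ (u n x - ulim x)) ∂μ := by
    intro n
    have h1 : k₀ * ∫ x, (u n x - ulim x) ⬝ᵥ (u n x - ulim x) ∂μ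
        ≤ ∫ x, (u n x - ulim x) ⬝ᵥ (A n x *ᵥ (u n x - ulim x)) ∂μ := by
      rw [← integral_const_mul]
      refine integral_mono_ae ((hI5 n).const_mul k₀) (hI6 n) ?_
      filter_upwards [hellip] with x hell
      exact ((hell (u n x - ulim x)).1 n).1
    have h2 : k₀⁻¹ * (k₀ * ∫ x, (u n x - ulim x) ⬝ᵥ (u n x - ulim x) ∂μ)
        = ∫ x, (u n x - ulim x) ⬝ᵥ (u n x - ulim x) ∂μ := by
      field_simp
    have h3 := mul_le_mul_of_nonneg_left h1 (inv_nonneg.mpr hk₀.le)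
    linarith
  have hfin := hQ.const_mul k₀⁻¹
  rw [mul_zero] at hfin
  exact squeeze_zero hnonneg hle hfin
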